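/- Let $H$ be a connected solvable spherical subgroup of $G$ standardly embedded in $B$, and let $\alpha$ be an active root. Then: (a) $|F(\alpha)| = |\mathrm{Supp}(\alpha)|$; (b) the restricted weights $\tau(\beta)$ for $\beta \in F(\alpha)$ are linearly independent; (c) the linear span of $F(\alpha)$ equals the linear span of $\mathrm{Supp}(\alpha)$. -/

import Mathlib

open scoped InnerProductSpace

/-- A reduced crystallographic root system in a Euclidean space `V`, together with a chosen
base of simple roots and the (integer) coordinates of each root in this base. -/
structure RootSystemData (V : Type) [NormedAddCommGroup V] [InnerProductSpace ℝ V] where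
  /-- the set of roots -/
  roots : Set V
  /-- the set of simple roots (the base) -/
  simples : Finset V
  finite : roots.Finite
  ne_zero : ∀ α ∈ roots, α ≠ (0 : V)
  neg_mem : ∀ α ∈ roots, -α ∈ roots
  reduced : ∀ α ∈ roots, (2 : ℝ) • α ∉ roots
  reflect_mem : ∀ α ∈ roots, ∀ β ∈ roots,
    β - (2 * ⟪α, β⟫_ℝ / ⟪α, α⟫_ℝ) • α ∈ roots
  cartan_int : ∀ α ∈ roots, ∀ β ∈ roots, ∃ n : ℤ,
    2 * ⟪α, β⟫_ℝ / ⟪α, α⟫_ℝ = (n : ℝ)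
  simples_mem : ∀ γ ∈ simples, γ ∈ roots
  simples_indep : LinearIndependent ℝ (fun γ : simples => (γ : V))
  /-- `coeff α γ` is the coefficient of the simple root `γ` in the root `α` -/
  coeff : V → V → ℤ
  coeff_spec : ∀ α ∈ roots, α = ∑ γ ∈ simples, coeff α γ • γ
  coeff_sign : ∀ α ∈ roots,
    (∀ γ ∈ simples, 0 ≤ coeff α γ) ∨ (∀ γ ∈ simples, coeff α γ ≤ 0)

namespace RootSystemData

variable {V : Type} [NormedAddCommGroup V] [InnerProductSpace ℝ V]

/-- The set of positive roots with respect to the base. -/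
def pos (R : RootSystemData V) : Set V :=
  {α ∈ R.roots | ∀ γ ∈ R.simples, 0 ≤ R.coeff α γ}

/-- The support of a root: the simple roots occurring in it with nonzero coefficient. -/
def Supp (R : RootSystemData V) (α : V) : Finset V :=
  R.simples.filter fun γ => R.coeff α γ ≠ 0

/-- The height of a root: the sum of its coefficients over the simple roots. -/
def height (R : RootSystemData V) (α : V) : ℤ :=
  ∑ γ ∈ R.simples, R.coeff α γ

/-- `s(α)`: the number of unordered representations of `α` as a sum of two positive
roots. -/
noncomputable def numDecomp (R : RootSystemData V) (α : V) : ℕ :=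
  {z : Sym2 V | ∃ β ∈ R.pos, ∃ γ ∈ R.pos, z = Sym2.mk β γ ∧ β + γ = α}.ncard

end RootSystemData

/-- The Lie-theoretic data attached to a connected solvable subgroup `H = S ⋉ N` of a
connected semisimple complex algebraic group `G`, standardly embedded in a Borel subgroup
`B = T ⋉ U`:
* the root system of `G` with respect to `T`, with the base determined by `B`;
* the restriction map `τ : 𝔛(T) ⊗ ℚ → 𝔛(S) ⊗ ℚ` of characters from `T` to the maximal
  torus `S = H ∩ T` of `H` (modelled as a linear map of vector spaces, `W = 𝔛(S) ⊗ ℚ`);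
* the nilpotent Lie algebra `L = 𝔲` of the maximal unipotent subgroup `U`, with its root
  space decomposition `𝔲 = ⨁_{α ∈ Δ₊} 𝔤_α`;
* the Lie algebra `𝔫 ⊆ 𝔲` of the unipotent radical `N = H ∩ U` of `H`, which is a
  subalgebra and is a sum of its `S`-weight components. -/
structure SphericalSetup (V : Type) [NormedAddCommGroup V] [InnerProductSpace ℝ V]
    (W : Type) [AddCommGroup W] [Module ℝ W]
    (L : Type) [LieRing L] [LieAlgebra ℂ L] extends RootSystemData V where
  /-- restriction of characters from `T` to `S` -/
  τ : V →ₗ[ℝ] W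
  /-- the root spaces `𝔤_α ⊆ 𝔲` -/
  g : V → Submodule ℂ L
  g_dim : ∀ α ∈ toRootSystemData.pos, Module.finrank ℂ (g α) = 1
  g_bot : ∀ α, α ∉ toRootSystemData.pos → g α = ⊥
  g_top : (⨆ α ∈ toRootSystemData.pos, g α) = (⊤ : Submodule ℂ L)
  bracket_mem : ∀ (α β : V), ∀ x ∈ g α, ∀ y ∈ g β, ⁅x, y⁆ ∈ g (α + β)
  bracket_ne : ∀ α ∈ toRootSystemData.pos, ∀ β ∈ toRootSystemData.pos,
    α + β ∈ toRootSystemData.pos → ∃ x ∈ g α, ∃ y ∈ g β, ⁅x, y⁆ ≠ (0 : L)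
  /-- the Lie algebra `𝔫` of the unipotent radical `N` of `H` -/
  n : Submodule ℂ L
  n_bracket : ∀ x ∈ n, ∀ y ∈ n, ⁅x, y⁆ ∈ n
  n_weight : n = ⨆ w : W, n ⊓ ⨆ α ∈ {a ∈ toRootSystemData.pos | τ a = w}, g α

namespace SphericalSetup

variable {V : Type} [NormedAddCommGroup V] [InnerProductSpace ℝ V]
  {W : Type} [AddCommGroup W] [Module ℝ W]
  {L : Type} [LieRing L] [LieAlgebra ℂ L]

/-- The `S`-weight subspace `𝔲_w ⊆ 𝔲` of weight `w`. -/
def uSp (S : SphericalSetup V W L) (w : W) : Submodule ℂ L :=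
  ⨆ α ∈ {a ∈ S.pos | S.τ a = w}, S.g α

/-- `c_w`: the codimension of `𝔫_w = 𝔫 ∩ 𝔲_w` in `𝔲_w`. -/
noncomputable def c (S : SphericalSetup V W L) (w : W) : ℕ :=
  Module.finrank ℂ (S.uSp w) - Module.finrank ℂ ↥(S.n ⊓ S.uSp w)

/-- The sphericity of `H` in `G`, via the criterion of Theorem `solvable_spherical`:
`c_w ≤ 1` for every weight `w`, and the weights `w` with `c_w = 1` are linearly
independent in `𝔛(S) ⊗ ℚ`. -/
def Spherical (S : SphericalSetup V W L) : Prop :=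
  (∀ w : W, S.c w ≤ 1) ∧
    LinearIndependent ℝ (fun w : {w : W // S.c w = 1} => (w : W))

/-- The set `Ψ` of active roots: positive roots `α` with `𝔤_α ⊄ 𝔫`. -/
def active (S : SphericalSetup V W L) : Set V :=
  {α ∈ S.pos | ¬ S.g α ≤ S.n}

/-- The family `F(α)` of active roots generated by an active root `α`: the root `α`
together with all active roots subordinate to it. -/
def family (S : SphericalSetup V W L) (α : V) : Set V :=
  insert α {β ∈ S.active | α - β ∈ S.pos}

end SphericalSetup


namespace RootSystemData

variable {V : Type} [NormedAddCommGroup V] [InnerProductSpace ℝ V] {R : RootSystemData V}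

lemma rep_unique {m₁ m₂ : V → ℤ}
    (h : (∑ γ ∈ R.simples, m₁ γ • γ : V) = ∑ γ ∈ R.simples, m₂ γ • γ) :
    ∀ γ ∈ R.simples, m₁ γ = m₂ γ := by
  have hli := linearIndependent_iff'.1 R.simples_indep
  have key : ∀ γ ∈ R.simples.attach, ((m₁ (γ:V) - m₂ (γ:V) : ℤ) : ℝ) = 0 := by
    apply hli R.simples.attach (fun γ => ((m₁ (γ:V) - m₂ (γ:V) : ℤ) : ℝ))
    have e1 : ∑ γ ∈ R.simples.attach, (((m₁ (γ:V) - m₂ (γ:V) : ℤ) : ℝ)) • (γ:V)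
        = ∑ γ ∈ R.simples.attach, ((m₁ (γ:V)) • (γ:V) - (m₂ (γ:V)) • (γ:V)) := by
      refine Finset.sum_congr rfl (fun γ _ => ?_)
      rw [Int.cast_smul_eq_zsmul, sub_zsmul, sub_eq_add_neg]
    rw [e1, Finset.sum_sub_distrib]
    rw [Finset.sum_attach R.simples (fun γ => m₁ γ • γ),
      Finset.sum_attach R.simples (fun γ => m₂ γ • γ), h, sub_self]
  intro γ hγ
  have := key ⟨γ, hγ⟩ (Finset.mem_attach _ _)
  have : (m₁ γ - m₂ γ : ℤ) = 0 := by exact_mod_cast this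
  omega

/-- If a root is written as an integer combination of the simple roots, the coefficients
must be the `coeff` data. -/
lemma coeff_eq_of_eq_sum {x : V} (hx : x ∈ R.roots) {m : V → ℤ}
    (h : x = ∑ γ ∈ R.simples, m γ • γ) :
    ∀ γ ∈ R.simples, R.coeff x γ = m γ :=
  rep_unique (by rw [← R.coeff_spec x hx, ← h])

lemma root_ne_zero {x : V} (hx : x ∈ R.roots) : x ≠ 0 := R.ne_zero x hx

lemma inner_self_pos' {x : V} (hx : x ≠ 0) : (0:ℝ) < ⟪x, x⟫_ℝ := by
  rw [real_inner_self_eq_norm_sq]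
  have : (0:ℝ) < ‖x‖ := norm_pos_iff.mpr hx
  positivity

lemma pos_root {x : V} (hx : x ∈ R.pos) : x ∈ R.roots := hx.1

lemma pos_coeff {x : V} (hx : x ∈ R.pos) : ∀ γ ∈ R.simples, 0 ≤ R.coeff x γ := hx.2

lemma mem_pos_of {x : V} (hx : x ∈ R.roots) (h : ∀ γ ∈ R.simples, 0 ≤ R.coeff x γ) :
    x ∈ R.pos := ⟨hx, h⟩

lemma neg_coeff {x : V} (hx : x ∈ R.roots) :
    ∀ γ ∈ R.simples, R.coeff (-x) γ = - R.coeff x γ := by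
  have h : (-x : V) = ∑ γ ∈ R.simples, (- R.coeff x γ) • γ := by
    calc (-x : V) = -(∑ γ ∈ R.simples, R.coeff x γ • γ) := by rw [← R.coeff_spec x hx]
      _ = ∑ γ ∈ R.simples, (- R.coeff x γ) • γ := by
          rw [← Finset.sum_neg_distrib]
          exact Finset.sum_congr rfl (fun γ _ => by rw [neg_zsmul])
  exact coeff_eq_of_eq_sum (R.neg_mem x hx) h

lemma pos_or_neg {x : V} (hx : x ∈ R.roots) : x ∈ R.pos ∨ -x ∈ R.pos := by
  rcases R.coeff_sign x hx with h | h
  · exact Or.inl ⟨hx, h⟩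
  · right
    refine ⟨R.neg_mem x hx, fun γ hγ => ?_⟩
    rw [neg_coeff hx γ hγ]
    have := h γ hγ
    omega

lemma add_coeff {x y : V} (hx : x ∈ R.roots) (hy : y ∈ R.roots) (hxy : x + y ∈ R.roots) :
    ∀ γ ∈ R.simples, R.coeff (x + y) γ = R.coeff x γ + R.coeff y γ := by
  refine coeff_eq_of_eq_sum hxy ?_
  calc x + y = (∑ γ ∈ R.simples, R.coeff x γ • γ) + ∑ γ ∈ R.simples, R.coeff y γ • γ := by
        rw [← R.coeff_spec x hx, ← R.coeff_spec y hy]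
    _ = ∑ γ ∈ R.simples, (R.coeff x γ + R.coeff y γ) • γ := by
        rw [← Finset.sum_add_distrib]
        exact Finset.sum_congr rfl (fun γ _ => by rw [add_zsmul])

lemma add_pos_mem {x y : V} (hx : x ∈ R.pos) (hy : y ∈ R.pos) (hxy : x + y ∈ R.roots) :
    x + y ∈ R.pos := by
  refine ⟨hxy, fun γ hγ => ?_⟩
  rw [add_coeff hx.1 hy.1 hxy γ hγ]
  have := hx.2 γ hγ
  have := hy.2 γ hγ
  omega

lemma neg_not_pos {x : V} (hx : x ∈ R.pos) : -x ∉ R.pos := by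
  intro hnx
  have hz : ∀ γ ∈ R.simples, R.coeff x γ = 0 := by
    intro γ hγ
    have h1 := hx.2 γ hγ
    have h2 := hnx.2 γ hγ
    rw [neg_coeff hx.1 γ hγ] at h2
    omega
  have : x = 0 := by
    rw [R.coeff_spec x hx.1]
    refine Finset.sum_eq_zero (fun γ hγ => by rw [hz γ hγ, zero_zsmul])
  exact R.ne_zero x hx.1 this

lemma zero_not_pos : (0 : V) ∉ R.pos := fun h => R.ne_zero 0 h.1 rfl

end RootSystemData
namespace RootSystemData

variable {V : Type} [NormedAddCommGroup V] [InnerProductSpace ℝ V] {R : RootSystemData V}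

open scoped Classical

lemma smul_root {x : V} {c : ℝ} (hx : x ∈ R.roots) (hy : (c • x : V) ∈ R.roots) :
    c = 1 ∨ c = -1 := by
  have hA := inner_self_pos' (R.ne_zero x hx)
  have hA' : ⟪x, x⟫_ℝ ≠ 0 := ne_of_gt hA
  have hc0 : c ≠ 0 := by
    rintro rfl
    exact R.ne_zero _ hy (zero_smul ℝ x)
  obtain ⟨n₁, hn₁⟩ := R.cartan_int x hx (c • x) hy
  obtain ⟨n₂, hn₂⟩ := R.cartan_int (c • x) hy x hx
  rw [real_inner_smul_right] at hn₁
  rw [real_inner_smul_left, real_inner_smul_left, real_inner_smul_right] at hn₂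
  have e₁ : 2 * c = (n₁ : ℝ) := by
    field_simp at hn₁
    exact hn₁
  have e₂ : (n₂ : ℝ) * c = 2 := by
    rw [div_eq_iff (mul_ne_zero hc0 (mul_ne_zero hc0 hA'))] at hn₂
    have hca : c * ⟪x, x⟫_ℝ ≠ 0 := mul_ne_zero hc0 hA'
    apply mul_right_cancel₀ hca
    rw [show ((n₂:ℝ) * c) * (c * ⟪x, x⟫_ℝ) = (n₂:ℝ) * (c * (c * ⟪x, x⟫_ℝ)) from by ring]
    linarith [hn₂]
  have hmulR : ((n₁ * n₂ : ℤ) : ℝ) = 4 := by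
    calc ((n₁ * n₂ : ℤ) : ℝ) = (n₁:ℝ) * (n₂:ℝ) := by push_cast; ring
    _ = (2*c) * (n₂:ℝ) := by rw [e₁]
    _ = 2 * ((n₂:ℝ) * c) := by ring
    _ = 4 := by rw [e₂]; norm_num
  have hmul : (n₁ * n₂ : ℤ) = 4 := by exact_mod_cast hmulR
  have hdvd : n₁ ∣ 4 := ⟨n₂, hmul.symm⟩
  have habs : |n₁| ≤ 4 := Int.le_of_dvd (by norm_num) ((abs_dvd _ _).mpr hdvd)
  obtain ⟨hb1, hb2⟩ := abs_le.mp habs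
  interval_cases n₁
  · -- n₁ = -4 : c = -2, c • x = -(2 • x)
    exfalso
    have hc : c = -2 := by push_cast at e₁; linarith
    have : -(c • x) ∈ R.roots := R.neg_mem _ hy
    rw [hc] at this
    rw [show -((-2 : ℝ) • x) = (2:ℝ) • x by module] at this
    exact R.reduced x hx this
  · exfalso; omega
  · -- n₁ = -2 : c = -1
    right; push_cast at e₁; linarith
  · -- n₁ = -1 : c = -1/2 : (2:ℝ) • (c • x) = -x
    exfalso
    have h2 : (2:ℝ) • (c • x) = -x := by
      rw [smul_smul]
      push_cast at e₁
      rw [show (2:ℝ) * c = -1 by linarith]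
      module
    have := R.reduced (c • x) hy
    rw [h2] at this
    exact this (R.neg_mem x hx)
  · exfalso; omega
  · -- n₁ = 1 : c = 1/2 : (2:ℝ) • (c • x) = x
    exfalso
    have h2 : (2:ℝ) • (c • x) = x := by
      rw [smul_smul]
      push_cast at e₁
      rw [show (2:ℝ) * c = 1 by linarith]
      module
    have := R.reduced (c • x) hy
    rw [h2] at this
    exact this hx
  · -- n₁ = 2 : c = 1
    left; push_cast at e₁; linarith
  · exfalso; omega
  · -- n₁ = 4 : c = 2
    exfalso
    have hc : c = 2 := by push_cast at e₁; linarith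
    rw [hc] at hy
    exact R.reduced x hx hy

lemma inner_sq_lt {x y : V} (hx : x ≠ 0) (hdep : ∀ c : ℝ, y ≠ c • x) :
    ⟪x, y⟫_ℝ ^ 2 < ⟪x, x⟫_ℝ * ⟪y, y⟫_ℝ := by
  have hA : (0:ℝ) < ⟪x, x⟫_ℝ := inner_self_pos' hx
  have hA' : ⟪x, x⟫_ℝ ≠ 0 := ne_of_gt hA
  set t : ℝ := ⟪x, y⟫_ℝ / ⟪x, x⟫_ℝ with ht
  have hne : y - t • x ≠ 0 := sub_ne_zero.mpr (hdep t)
  have h := inner_self_pos' hne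
  have hexp : ⟪y - t • x, y - t • x⟫_ℝ
      = ⟪y, y⟫_ℝ - 2 * t * ⟪x, y⟫_ℝ + t ^ 2 * ⟪x, x⟫_ℝ := by
    rw [real_inner_sub_sub_self, real_inner_smul_right, real_inner_smul_left,
      real_inner_smul_right, real_inner_comm y x]
    ring
  rw [hexp] at h
  have h2 : (⟪y, y⟫_ℝ - 2 * t * ⟪x, y⟫_ℝ + t ^ 2 * ⟪x, x⟫_ℝ) * ⟪x, x⟫_ℝ
      = ⟪x, x⟫_ℝ * ⟪y, y⟫_ℝ - ⟪x, y⟫_ℝ ^ 2 := by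
    rw [ht]
    field_simp
    ring
  nlinarith [mul_pos h hA]

lemma sub_mem_of_inner_pos {x y : V} (hx : x ∈ R.roots) (hy : y ∈ R.roots)
    (hip : 0 < ⟪x, y⟫_ℝ) (hdep : ∀ c : ℝ, y ≠ c • x) : x - y ∈ R.roots := by
  have hA := inner_self_pos' (R.ne_zero x hx)
  have hC := inner_self_pos' (R.ne_zero y hy)
  obtain ⟨n₁, hn₁⟩ := R.cartan_int x hx y hy
  obtain ⟨n₂, hn₂⟩ := R.cartan_int y hy x hx
  rw [real_inner_comm x y] at hn₂
  have hn₁pos : 0 < (n₁ : ℝ) := by rw [← hn₁]; positivity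
  have hn₂pos : 0 < (n₂ : ℝ) := by rw [← hn₂]; positivity
  have hsq := inner_sq_lt (R.ne_zero x hx) hdep
  have hprod : ((n₁ * n₂ : ℤ) : ℝ) < 4 := by
    push_cast
    rw [← hn₁, ← hn₂]
    rw [div_mul_div_comm]
    rw [div_lt_iff₀ (by positivity)]
    nlinarith [hsq]
  have h₁ : 1 ≤ n₁ := by exact_mod_cast hn₁pos
  have h₂ : 1 ≤ n₂ := by exact_mod_cast hn₂pos
  have hp4 : n₁ * n₂ < 4 := by exact_mod_cast hprod
  have hor : n₁ = 1 ∨ n₂ = 1 := by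
    by_contra hcon
    push_neg at hcon
    have h4 : 2 * 2 ≤ n₁ * n₂ :=
      mul_le_mul (by omega) (by omega) (by omega) (by omega)
    omega
  rcases hor with h | h
  · -- reflect x: y - n₁ • x = y - x ∈ roots
    have hr := R.reflect_mem x hx y hy
    rw [hn₁, h] at hr
    push_cast at hr
    rw [one_smul] at hr
    have := R.neg_mem _ hr
    rwa [neg_sub] at this
  · have hr := R.reflect_mem y hy x hx
    rw [real_inner_comm x y] at hr
    rw [hn₂, h] at hr
    push_cast at hr
    rwa [one_smul] at hr

lemma simple_coeff {δ : V} (hδ : δ ∈ R.simples) :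
    ∀ γ ∈ R.simples, R.coeff δ γ = if γ = δ then 1 else 0 := by
  refine coeff_eq_of_eq_sum (R.simples_mem δ hδ) ?_
  rw [show (∑ γ ∈ R.simples, (if γ = δ then (1:ℤ) else 0) • γ)
      = ∑ γ ∈ R.simples, (if γ = δ then γ else 0) from
    Finset.sum_congr rfl (fun γ _ => by split <;> simp)]
  rw [Finset.sum_ite_eq' R.simples δ (fun γ => γ)]
  simp [hδ]

lemma simple_pos {δ : V} (hδ : δ ∈ R.simples) : δ ∈ R.pos := by
  refine ⟨R.simples_mem δ hδ, fun γ hγ => ?_⟩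
  rw [simple_coeff hδ γ hγ]
  split <;> omega

lemma exists_supp_ne {x δ : V} (hx : x ∈ R.pos) (hδ : δ ∈ R.simples) (hxδ : x ≠ δ) :
    ∃ γ₀ ∈ R.simples, γ₀ ≠ δ ∧ 1 ≤ R.coeff x γ₀ := by
  by_contra h
  push_neg at h
  have hz : ∀ γ ∈ R.simples, γ ≠ δ → R.coeff x γ = 0 := by
    intro γ hγ hne
    have h1 := h γ hγ hne
    have h2 := hx.2 γ hγ
    omega
  have hxe : x = (R.coeff x δ : ℤ) • δ := by
    calc x = ∑ γ ∈ R.simples, R.coeff x γ • γ := R.coeff_spec x hx.1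
    _ = (R.coeff x δ : ℤ) • δ := by
        rw [Finset.sum_eq_single δ]
        · intro γ hγ hne
          rw [hz γ hγ hne, zero_zsmul]
        · intro hδ'
          exact absurd hδ hδ'
  have hxr : ((R.coeff x δ : ℤ) : ℝ) • δ ∈ R.roots := by
    rw [Int.cast_smul_eq_zsmul, ← hxe]
    exact hx.1
  have := smul_root (R.simples_mem δ hδ) hxr
  have hge : 0 ≤ R.coeff x δ := hx.2 δ hδ
  rcases this with h1 | h1
  · apply hxδ
    rw [hxe]
    have : R.coeff x δ = 1 := by exact_mod_cast h1
    rw [this, one_zsmul]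
  · have : R.coeff x δ = -1 := by exact_mod_cast h1
    omega

lemma exists_inner_simple {x : V} (hx : x ∈ R.pos) :
    ∃ δ ∈ R.simples, 0 < R.coeff x δ ∧ 0 < ⟪x, δ⟫_ℝ := by
  by_contra h
  push_neg at h
  have hxx : (0:ℝ) < ⟪x, x⟫_ℝ := inner_self_pos' (R.ne_zero x hx.1)
  have hsum : ⟪x, x⟫_ℝ = ∑ γ ∈ R.simples, ((R.coeff x γ : ℝ)) * ⟪x, γ⟫_ℝ := by
    have h1 := congrArg (fun v => ⟪x, v⟫_ℝ) (R.coeff_spec x hx.1)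
    rw [inner_sum] at h1
    rw [h1]
    refine Finset.sum_congr rfl (fun γ _ => ?_)
    rw [← Int.cast_smul_eq_zsmul ℝ, real_inner_smul_right]
  have hle : ⟪x, x⟫_ℝ ≤ 0 := by
    rw [hsum]
    refine Finset.sum_nonpos (fun γ hγ => ?_)
    rcases lt_or_eq_of_le (hx.2 γ hγ) with hlt | heq
    · have := h γ hγ hlt
      have hcast : (0:ℝ) < (R.coeff x γ : ℝ) := by exact_mod_cast hlt
      nlinarith
    · rw [← heq]
      simp
  linarith

lemma coeff_sub_smul {x δ : V} (hδ : δ ∈ R.simples) (hx : x ∈ R.roots) (m : ℤ)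
    (hy : x - (m : ℝ) • δ ∈ R.roots) :
    ∀ γ ∈ R.simples, R.coeff (x - (m:ℝ) • δ) γ = R.coeff x γ - (if γ = δ then m else 0) := by
  refine coeff_eq_of_eq_sum hy ?_
  have hδsum : ((m : ℝ) • δ : V) = ∑ γ ∈ R.simples, (if γ = δ then m else 0) • γ := by
    rw [show (∑ γ ∈ R.simples, (if γ = δ then m else 0) • γ)
        = ∑ γ ∈ R.simples, (if γ = δ then m • γ else 0) from
      Finset.sum_congr rfl (fun γ _ => by split <;> simp)]
    rw [Finset.sum_ite_eq' R.simples δ (fun γ => m • γ)]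
    simp [hδ, Int.cast_smul_eq_zsmul]
  calc x - (m:ℝ) • δ
      = (∑ γ ∈ R.simples, R.coeff x γ • γ) - ∑ γ ∈ R.simples, (if γ = δ then m else 0) • γ := by
        rw [← R.coeff_spec x hx, ← hδsum]
    _ = ∑ γ ∈ R.simples, (R.coeff x γ - (if γ = δ then m else 0)) • γ := by
        rw [← Finset.sum_sub_distrib]
        exact Finset.sum_congr rfl (fun γ _ => by rw [sub_zsmul, sub_eq_add_neg])

lemma pos_of_sub_smul {x δ : V} (hx : x ∈ R.pos) (hδ : δ ∈ R.simples) (hne : x ≠ δ)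
    (m : ℤ) (hy : x - (m : ℝ) • δ ∈ R.roots) : x - (m:ℝ) • δ ∈ R.pos := by
  obtain ⟨γ₀, hγ₀, hγ₀ne, hγ₀c⟩ := exists_supp_ne hx hδ hne
  have hcoeff := coeff_sub_smul hδ hx.1 m hy
  rcases R.coeff_sign _ hy with h | h
  · exact ⟨hy, h⟩
  · exfalso
    have := h γ₀ hγ₀
    rw [hcoeff γ₀ hγ₀, if_neg hγ₀ne] at this
    omega

end RootSystemData
namespace RootSystemData

variable {V : Type} [NormedAddCommGroup V] [InnerProductSpace ℝ V] {R : RootSystemData V}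

open scoped Classical

lemma mem_span_supp {x : V} (hx : x ∈ R.roots) :
    x ∈ Submodule.span ℝ ((R.Supp x : Set V)) := by
  have hx2 : x = ∑ γ ∈ R.Supp x, R.coeff x γ • γ := by
    rw [Supp]
    rw [Finset.sum_filter_of_ne (fun γ hγ hne => by
      intro hc
      exact hne (by rw [hc, zero_zsmul]))]
    exact R.coeff_spec x hx
  have hmem : (∑ γ ∈ R.Supp x, R.coeff x γ • γ) ∈ Submodule.span ℝ ((R.Supp x : Set V)) := by
    refine Submodule.sum_mem _ (fun γ hγ => ?_)
    rw [← Int.cast_smul_eq_zsmul ℝ]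
    exact Submodule.smul_mem _ _ (Submodule.subset_span (Finset.mem_coe.mpr hγ))
  rwa [← hx2] at hmem

lemma height_nonneg {x : V} (hx : x ∈ R.pos) : 0 ≤ R.height x :=
  Finset.sum_nonneg hx.2

lemma height_pos {x : V} (hx : x ∈ R.pos) : 1 ≤ R.height x := by
  obtain ⟨δ, hδs, hδc, -⟩ := exists_inner_simple hx
  calc (1:ℤ) ≤ R.coeff x δ := hδc
    _ ≤ R.height x := Finset.single_le_sum (fun γ hγ => hx.2 γ hγ) hδs

/-- The key counting inequality: a positive root `α` admits at least `|Supp α| - 1`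
unordered decompositions into sums of two positive roots (stated via the set of ordered
decompositions, which has twice that cardinality). -/
lemma two_mul_card_le_D (R : RootSystemData V) :
    ∀ α ∈ R.pos, 2 * (R.Supp α).card ≤ {β : V | β ∈ R.pos ∧ α - β ∈ R.pos}.ncard + 2 := by
  suffices H : ∀ N : ℕ, ∀ α ∈ R.pos, (R.height α).toNat ≤ N →
      2 * (R.Supp α).card ≤ {β : V | β ∈ R.pos ∧ α - β ∈ R.pos}.ncard + 2 by
    intro α hα
    exact H _ α hα le_rfl
  intro N
  induction N with
  | zero =>
    intro α hα hN
    have := height_pos hα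
    omega
  | succ N IH =>
    intro α hα hN
    by_cases hk : (R.Supp α).card ≤ 1
    · omega
    push_neg at hk
    obtain ⟨δ, hδs, hδc, hδip⟩ := exists_inner_simple hα
    have hδroot := R.simples_mem δ hδs
    have hδpos := simple_pos hδs
    have hδSupp : δ ∈ R.Supp α := Finset.mem_filter.mpr ⟨hδs, by omega⟩
    have hαδ : α ≠ δ := by
      intro heq
      have hsub : R.Supp α ⊆ {δ} := by
        intro γ hγ
        rcases Finset.mem_filter.mp hγ with ⟨hγs, hγc⟩
        rw [Finset.mem_singleton]
        by_contra hne
        apply hγc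
        rw [heq, simple_coeff hδs γ hγs, if_neg hne]
      have := Finset.card_le_card hsub
      simp only [Finset.card_singleton] at this
      omega
    obtain ⟨n, hn⟩ := R.cartan_int δ hδroot α hα.1
    have hδδ := inner_self_pos' (R.ne_zero δ hδroot)
    have hδα : 0 < ⟪δ, α⟫_ℝ := by
      rw [← real_inner_comm δ α]
      exact hδip
    have hn1 : 1 ≤ n := by
      have h0 : (0:ℝ) < (n:ℝ) := by
        rw [← hn]
        positivity
      exact_mod_cast h0
    set β₀ : V := α - (n:ℝ) • δ with hβ₀def
    have hβ₀root : β₀ ∈ R.roots := by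
      have := R.reflect_mem δ hδroot α hα.1
      rwa [hn] at this
    have hβ₀pos : β₀ ∈ R.pos := pos_of_sub_smul hα hδs hαδ n hβ₀root
    have hβ₀coeff := coeff_sub_smul hδs hα.1 n hβ₀root
    have hhβ : R.height β₀ = R.height α - n := by
      calc R.height β₀ = ∑ γ ∈ R.simples, (R.coeff α γ - if γ = δ then n else 0) :=
            Finset.sum_congr rfl (fun γ hγ => hβ₀coeff γ hγ)
      _ = R.height α - n := by
            rw [Finset.sum_sub_distrib, Finset.sum_ite_eq' R.simples δ (fun _ => n),
              if_pos hδs]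
            rfl
    have hhtlt : (R.height β₀).toNat ≤ N := by
      have h1 : 0 ≤ R.height β₀ := height_nonneg hβ₀pos
      have h2 : 0 ≤ R.height α := height_nonneg hα
      omega
    have hsuppsub : R.Supp α ⊆ insert δ (R.Supp β₀) := by
      intro γ hγ
      rcases Finset.mem_filter.mp hγ with ⟨hγs, hγc⟩
      rcases eq_or_ne γ δ with rfl | hne
      · exact Finset.mem_insert_self _ _
      · refine Finset.mem_insert_of_mem (Finset.mem_filter.mpr ⟨hγs, ?_⟩)
        rw [hβ₀coeff γ hγs, if_neg hne]
        simpa using hγc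
    have hk₀ : (R.Supp α).card ≤ (R.Supp β₀).card + 1 :=
      le_trans (Finset.card_le_card hsuppsub) (Finset.card_insert_le _ _)
    have hdep : ∀ c : ℝ, δ ≠ c • α := by
      intro c hc
      rcases smul_root hα.1 (by rw [← hc]; exact hδroot) with h1 | h1
      · rw [h1, one_smul] at hc
        exact hαδ hc.symm
      · rw [h1] at hc
        have hneg : -α = δ := by rw [hc]; module
        exact neg_not_pos hα (hneg ▸ hδpos)
    have hαδroot : α - δ ∈ R.roots := sub_mem_of_inner_pos hα.1 hδroot hδip hdep
    have hcast1 : α - ((1:ℤ):ℝ) • δ = α - δ := by norm_num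
    have hαδpos : α - δ ∈ R.pos := by
      have := pos_of_sub_smul hα hδs hαδ 1 (by rw [hcast1]; exact hαδroot)
      rwa [hcast1] at this
    -- the reflection in δ
    set f : V → V := fun v => v - (2 * ⟪δ, v⟫_ℝ / ⟪δ, δ⟫_ℝ) • δ with hfdef
    have hfroot : ∀ v ∈ R.roots, f v ∈ R.roots := fun v hv => R.reflect_mem δ hδroot v hv
    have hfsub : ∀ a b : V, f (a - b) = f a - f b := by
      intro a b
      simp only [hfdef, inner_sub_right]
      rw [show 2 * (⟪δ, a⟫_ℝ - ⟪δ, b⟫_ℝ) / ⟪δ, δ⟫_ℝ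
          = 2 * ⟪δ, a⟫_ℝ / ⟪δ, δ⟫_ℝ - 2 * ⟪δ, b⟫_ℝ / ⟪δ, δ⟫_ℝ from by ring, sub_smul]
      abel
    have hfinv : ∀ v : V, f (f v) = v := by
      intro v
      have h1 : ⟪δ, f v⟫_ℝ = - ⟪δ, v⟫_ℝ := by
        simp only [hfdef, inner_sub_right, real_inner_smul_right]
        field_simp
        ring
      simp only [hfdef] at h1 ⊢
      rw [h1]
      rw [show 2 * -⟪δ, v⟫_ℝ / ⟪δ, δ⟫_ℝ = -(2 * ⟪δ, v⟫_ℝ / ⟪δ, δ⟫_ℝ) from by ring, neg_smul]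
      abel
    have hfinj : Function.Injective f := Function.Involutive.injective hfinv
    have hfα : f α = β₀ := by
      simp only [hfdef]
      rw [hn]
    have hfβ₀ : f β₀ = α := by rw [← hfα, hfinv]
    have hfδ : f δ = -δ := by
      simp only [hfdef]
      rw [mul_div_assoc, div_self (ne_of_gt hδδ), mul_one, two_smul]
      abel
    have hfpos : ∀ v ∈ R.pos, v ≠ δ → f v ∈ R.pos := by
      intro v hv hne
      obtain ⟨m, hm⟩ := R.cartan_int δ hδroot v hv.1
      have hfv : f v = v - (m:ℝ) • δ := by
        simp only [hfdef]
        rw [hm]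
      rw [hfv]
      refine pos_of_sub_smul hv hδs hne m ?_
      rw [← hfv]
      exact hfroot v hv.1
    -- the decomposition sets
    set Dα := {β : V | β ∈ R.pos ∧ α - β ∈ R.pos} with hDαdef
    set Dβ := {β : V | β ∈ R.pos ∧ β₀ - β ∈ R.pos} with hDβdef
    have hDαfin : Dα.Finite := R.finite.subset (fun v hv => hv.1.1)
    have hDβfin : Dβ.Finite := R.finite.subset (fun v hv => hv.1.1)
    set A := Dβ \ {δ, β₀ - δ} with hAdef
    have hAfin : A.Finite := hDβfin.subset Set.diff_subset
    have himsub : (f '' A) ⊆ Dα := by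
      rintro - ⟨v, hvA, rfl⟩
      obtain ⟨⟨hvpos, hvD⟩, hvne⟩ := hvA
      simp only [Set.mem_insert_iff, Set.mem_singleton_iff, not_or] at hvne
      refine ⟨hfpos v hvpos hvne.1, ?_⟩
      have h2 : α - f v = f (β₀ - v) := by rw [hfsub, hfβ₀]
      rw [h2]
      refine hfpos _ hvD ?_
      intro hcon
      apply hvne.2
      have : v = β₀ - δ := by
        rw [← hcon]
        abel
      exact this
    have hδne : δ ≠ α - δ := by
      intro h
      have : α = (2:ℝ) • δ := by
        rw [two_smul]
        have := h.symm
        rw [sub_eq_iff_eq_add] at this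
        rw [this]
      exact R.reduced δ hδroot (this ▸ hα.1)
    have hextra : ({δ, α - δ} : Set V) ⊆ Dα := by
      intro v hv
      simp only [Set.mem_insert_iff, Set.mem_singleton_iff] at hv
      rcases hv with rfl | rfl
      · exact ⟨hδpos, hαδpos⟩
      · refine ⟨hαδpos, ?_⟩
        rw [sub_sub_cancel]
        exact hδpos
    have hdisj : Disjoint (f '' A) ({δ, α - δ} : Set V) := by
      rw [Set.disjoint_right]
      rintro v hv hmem
      obtain ⟨u, huA, hufu⟩ := hmem
      obtain ⟨⟨hupos, huD⟩, hune⟩ := huA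
      simp only [Set.mem_insert_iff, Set.mem_singleton_iff] at hv
      rcases hv with hv1 | hv1
      · -- u = f δ = -δ
        have : u = -δ := by
          rw [← hfinv u, hufu, hv1, hfδ]
        rw [this] at hupos
        exact neg_not_pos hδpos hupos
      · have hu : u = β₀ + δ := by
          have h3 : u = f (α - δ) := by rw [← hfinv u, hufu, hv1]
          rw [h3, hfsub, hfα, hfδ]
          abel
        rw [hu] at huD
        have : β₀ - (β₀ + δ) = -δ := by abel
        rw [this] at huD
        exact neg_not_pos hδpos huD
    have hcount1 : (f '' A).ncard + 2 ≤ Dα.ncard := by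
      have hun : (f '' A ∪ {δ, α - δ}).ncard = (f '' A).ncard + 2 := by
        rw [Set.ncard_union_eq hdisj (hAfin.image f)
          ((Set.finite_singleton _).insert _), Set.ncard_pair hδne]
      calc (f '' A).ncard + 2 = (f '' A ∪ {δ, α - δ}).ncard := hun.symm
        _ ≤ Dα.ncard := Set.ncard_le_ncard (Set.union_subset himsub hextra) hDαfin
    have hAcard : (f '' A).ncard = A.ncard := Set.ncard_image_of_injective _ hfinj
    have hIH := IH β₀ hβ₀pos hhtlt
    rw [← hDβdef] at hIH
    by_cases hcase : β₀ - δ ∈ R.pos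
    · -- no support drop
      have hβ₀δcast : β₀ - ((1:ℤ):ℝ) • δ = β₀ - δ := by norm_num
      have hco := coeff_sub_smul hδs hβ₀root (1:ℤ) (by rw [hβ₀δcast]; exact hcase.1)
      have hsupαβ : R.Supp α ⊆ R.Supp β₀ := by
        intro γ hγ
        rcases Finset.mem_filter.mp hγ with ⟨hγs, hγc⟩
        refine Finset.mem_filter.mpr ⟨hγs, ?_⟩
        rcases eq_or_ne γ δ with rfl | hne
        · have h0 := hcase.2 γ hγs
          have h1 := hco γ hγs
          rw [hβ₀δcast] at h1
          rw [h1, if_pos rfl] at h0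
          omega
        · rw [hβ₀coeff γ hγs, if_neg hne]
          simpa using hγc
      have hkk : (R.Supp α).card ≤ (R.Supp β₀).card := Finset.card_le_card hsupαβ
      have hDβA : Dβ.ncard ≤ A.ncard + 2 := by
        calc Dβ.ncard ≤ (A ∪ {δ, β₀ - δ}).ncard := by
              refine Set.ncard_le_ncard (fun v hv => ?_)
                ((hAfin.union ((Set.finite_singleton _).insert _)))
              by_cases hv2 : v ∈ ({δ, β₀ - δ} : Set V)
              · exact Or.inr hv2
              · exact Or.inl ⟨hv, hv2⟩
          _ ≤ A.ncard + ({δ, β₀ - δ} : Set V).ncard := Set.ncard_union_le _ _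
          _ ≤ A.ncard + 2 := by
              have h5 : ({δ, β₀ - δ} : Set V).ncard ≤ 2 := by
                apply le_trans (Set.ncard_insert_le _ _)
                simp
              omega
      omega
    · -- support may drop, but no collision
      have hDβsubA : Dβ ⊆ A := by
        intro v hv
        refine ⟨hv, ?_⟩
        simp only [Set.mem_insert_iff, Set.mem_singleton_iff, not_or]
        constructor
        · rintro rfl
          exact hcase hv.2
        · rintro rfl
          exact hcase hv.1
      have hDA : Dβ.ncard ≤ A.ncard := Set.ncard_le_ncard hDβsubA hAfin
      omega

end RootSystemData
namespace SphericalSetup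

variable {V : Type} [NormedAddCommGroup V] [InnerProductSpace ℝ V]
  {W : Type} [AddCommGroup W] [Module ℝ W]
  {L : Type} [LieRing L] [LieAlgebra ℂ L] [FiniteDimensional ℂ L]
  {S : SphericalSetup V W L}

open RootSystemData

/-- A one-dimensional submodule is contained in any submodule containing one of its
nonzero vectors. -/
lemma oneDim_le {p q : Submodule ℂ L} (hp : Module.finrank ℂ p = 1) {x : L}
    (hx : x ∈ p) (h0 : x ≠ 0) (hxq : x ∈ q) : p ≤ q := by
  have hsp : Submodule.span ℂ {x} ≤ p := Submodule.span_le.mpr (Set.singleton_subset_iff.mpr hx)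
  have heq : Submodule.span ℂ {x} = p :=
    Submodule.eq_of_le_of_finrank_le hsp (by rw [hp, finrank_span_singleton h0])
  rw [← heq]
  exact Submodule.span_le.mpr (Set.singleton_subset_iff.mpr hxq)

lemma oneDim_eq {p q : Submodule ℂ L} (hp : Module.finrank ℂ p = 1)
    (hq : Module.finrank ℂ q = 1) {x : L} (h0 : x ≠ 0) (hx : x ∈ p) (hxq : x ∈ q) :
    p = q := by
  have h1 : Submodule.span ℂ {x} = p :=
    Submodule.eq_of_le_of_finrank_le
      (Submodule.span_le.mpr (Set.singleton_subset_iff.mpr hx))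
      (by rw [hp, finrank_span_singleton h0])
  have h2 : Submodule.span ℂ {x} = q :=
    Submodule.eq_of_le_of_finrank_le
      (Submodule.span_le.mpr (Set.singleton_subset_iff.mpr hxq))
      (by rw [hq, finrank_span_singleton h0])
  rw [← h1, h2]

lemma g_ne_bot {a : V} (ha : a ∈ S.pos) : ∃ x ∈ S.g a, x ≠ 0 := by
  have h1 := S.g_dim a ha
  have : S.g a ≠ ⊥ := by
    intro h
    rw [h] at h1
    simp [finrank_bot] at h1
  exact Submodule.exists_mem_ne_zero_of_ne_bot this

lemma bracket_ne' {a b : V} (ha : a ∈ S.pos) (hb : b ∈ S.pos) (hab : a + b ∈ S.pos)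
    {x y : L} (hx : x ∈ S.g a) (hx0 : x ≠ 0) (hy : y ∈ S.g b) (hy0 : y ≠ 0) :
    ⁅x, y⁆ ≠ (0 : L) := by
  obtain ⟨x₀, hx₀, y₀, hy₀, hne⟩ := S.bracket_ne a ha b hb hab
  have hspx : Submodule.span ℂ {x} = S.g a :=
    Submodule.eq_of_le_of_finrank_le
      (Submodule.span_le.mpr (Set.singleton_subset_iff.mpr hx))
      (by rw [S.g_dim a ha, finrank_span_singleton hx0])
  have hspy : Submodule.span ℂ {y} = S.g b :=
    Submodule.eq_of_le_of_finrank_le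
      (Submodule.span_le.mpr (Set.singleton_subset_iff.mpr hy))
      (by rw [S.g_dim b hb, finrank_span_singleton hy0])
  rw [← hspx, Submodule.mem_span_singleton] at hx₀
  rw [← hspy, Submodule.mem_span_singleton] at hy₀
  obtain ⟨cx, rfl⟩ := hx₀
  obtain ⟨cy, rfl⟩ := hy₀
  intro h
  apply hne
  rw [smul_lie, lie_smul, h, smul_zero, smul_zero]

lemma active_pos {a : V} (ha : a ∈ S.active) : a ∈ S.pos := ha.1

lemma passive_le {a : V} (ha : a ∈ S.pos) (hna : a ∉ S.active) : S.g a ≤ S.n := by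
  by_contra h
  exact hna ⟨ha, h⟩

lemma atLeastOne {b c : V} (hb : b ∈ S.pos) (hc : c ∈ S.pos) (hbc : b + c ∈ S.active) :
    b ∈ S.active ∨ c ∈ S.active := by
  by_contra h
  push_neg at h
  have hgb := passive_le hb h.1
  have hgc := passive_le hc h.2
  obtain ⟨x, hx, y, hy, hne⟩ := S.bracket_ne b hb c hc hbc.1
  have hmem : ⁅x, y⁆ ∈ S.n := S.n_bracket x (hgb hx) y (hgc hy)
  have hg : ⁅x, y⁆ ∈ S.g (b + c) := S.bracket_mem b c x hx y hy
  exact hbc.2 (oneDim_le (S.g_dim _ hbc.1) hg hne hmem)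

lemma g_le_uSp {a : V} (ha : a ∈ S.pos) {w : W} (hw : S.τ a = w) :
    S.g a ≤ S.uSp w := by
  have : S.g a ≤ ⨆ (_ : a ∈ {x ∈ S.pos | S.τ x = w}), S.g a :=
    le_iSup_of_le ⟨ha, hw⟩ le_rfl
  exact le_trans this (le_iSup (fun α => ⨆ (_ : α ∈ {x ∈ S.pos | S.τ x = w}), S.g α) a)

lemma cOne (hS : S.Spherical) {a : V} (ha : a ∈ S.active) : S.c (S.τ a) = 1 := by
  have hga : S.g a ≤ S.uSp (S.τ a) := g_le_uSp ha.1 rfl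
  have hle : S.n ⊓ S.uSp (S.τ a) ≤ S.uSp (S.τ a) := inf_le_right
  have hne : Module.finrank ℂ (S.n ⊓ S.uSp (S.τ a) : Submodule ℂ L)
      ≠ Module.finrank ℂ (S.uSp (S.τ a)) := by
    intro h
    have h2 := Submodule.eq_of_le_of_finrank_le hle (le_of_eq h.symm)
    have hun : S.uSp (S.τ a) ≤ S.n := by
      rw [← h2]
      exact inf_le_left
    exact ha.2 (le_trans hga hun)
  have hmono : Module.finrank ℂ (S.n ⊓ S.uSp (S.τ a) : Submodule ℂ L)
      ≤ Module.finrank ℂ (S.uSp (S.τ a)) := Submodule.finrank_mono hle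
  have hc := hS.1 (S.τ a)
  unfold SphericalSetup.c at hc ⊢
  omega

lemma weight_ne_zero (hS : S.Spherical) {w : W} (h : S.c w = 1) : w ≠ 0 :=
  hS.2.ne_zero ⟨w, h⟩

lemma indep_two (hS : S.Spherical) {w₁ w₂ : W} (h₁ : S.c w₁ = 1) (h₂ : S.c w₂ = 1)
    (hne : w₁ ≠ w₂) {r s : ℝ} (hrel : r • w₁ + s • w₂ = 0) : r = 0 ∧ s = 0 := by
  classical
  have hli := linearIndependent_iff'.1 hS.2
  set a : {w : W // S.c w = 1} := ⟨w₁, h₁⟩ with hadef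
  set b : {w : W // S.c w = 1} := ⟨w₂, h₂⟩ with hbdef
  have hab : a ≠ b := fun h => hne (by rw [hadef, hbdef] at h; exact congrArg Subtype.val h)
  have key := hli {a, b} (fun i => if i = a then r else s) ?_
  · constructor
    · have := key a (Finset.mem_insert_self _ _)
      simpa using this
    · have := key b (Finset.mem_insert_of_mem (Finset.mem_singleton_self _))
      simpa [hab.symm] using this
  · rw [Finset.sum_pair hab]
    simp only [if_pos rfl, if_neg hab.symm]
    exact hrel

lemma indep_three (hS : S.Spherical) {w₁ w₂ w₃ : W} (h₁ : S.c w₁ = 1) (h₂ : S.c w₂ = 1)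
    (h₃ : S.c w₃ = 1) (h12 : w₁ ≠ w₂) (h13 : w₁ ≠ w₃) (h23 : w₂ ≠ w₃)
    {r s t : ℝ} (hrel : r • w₁ + s • w₂ + t • w₃ = 0) : r = 0 := by
  classical
  have hli := linearIndependent_iff'.1 hS.2
  set a : {w : W // S.c w = 1} := ⟨w₁, h₁⟩ with hadef
  set b : {w : W // S.c w = 1} := ⟨w₂, h₂⟩ with hbdef
  set d : {w : W // S.c w = 1} := ⟨w₃, h₃⟩ with hddef
  have hab : a ≠ b := fun h => h12 (by rw [hadef, hbdef] at h; exact congrArg Subtype.val h)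
  have had : a ≠ d := fun h => h13 (by rw [hadef, hddef] at h; exact congrArg Subtype.val h)
  have hbd : b ≠ d := fun h => h23 (by rw [hbdef, hddef] at h; exact congrArg Subtype.val h)
  have key := hli {a, b, d} (fun i => if i = a then r else if i = b then s else t) ?_
  · have := key a (Finset.mem_insert_self _ _)
    simpa using this
  · rw [Finset.sum_insert (by simp [hab, had]), Finset.sum_pair hbd]
    simp only [if_pos rfl, if_neg hab.symm, if_neg had.symm, if_neg hbd.symm]
    simp only [if_true]
    rw [add_assoc] at hrel
    exact hrel

/-- If an active root is decomposed as a sum of two positive roots with the first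
active, then the second is passive. -/
lemma passive_of_active_add (hS : S.Spherical) {b c : V} (hb : b ∈ S.active)
    (hc : c ∈ S.pos) (hbc : b + c ∈ S.active) : S.g c ≤ S.n := by
  rcases Classical.em (c ∈ S.active) with hca | hca
  swap
  · exact passive_le hc hca
  exfalso
  have h1 := cOne hS hb
  have h2 := cOne hS hca
  have h3 := cOne hS hbc
  have hadd : S.τ (b + c) = S.τ b + S.τ c := map_add _ _ _
  have hbne := weight_ne_zero hS h1
  have hcne := weight_ne_zero hS h2
  rcases eq_or_ne (S.τ (b + c)) (S.τ b) with he | he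
  · rw [hadd, add_eq_left] at he
    exact hcne he
  rcases eq_or_ne (S.τ (b + c)) (S.τ c) with he2 | he2
  · rw [hadd, add_comm, add_eq_left] at he2
    exact hbne he2
  rcases eq_or_ne (S.τ b) (S.τ c) with he3 | he3
  · -- τ(b+c) = 2 τ b
    have hrel : (2 : ℝ) • S.τ b + (-1 : ℝ) • S.τ (b + c) = 0 := by
      rw [hadd, ← he3, two_smul]
      module
    have := indep_two hS h1 h3 he.symm hrel
    norm_num at this
  · -- three distinct
    have hrel : (1 : ℝ) • S.τ b + (1 : ℝ) • S.τ c + (-1 : ℝ) • S.τ (b + c) = 0 := by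
      rw [hadd]
      module
    have := indep_three hS h1 h2 h3 he3 he.symm he2.symm hrel
    norm_num at this

lemma not_active_add (hS : S.Spherical) {b c : V} (hb : b ∈ S.active)
    (hc : c ∈ S.active) (hbc : b + c ∈ S.pos) : b + c ∉ S.active := by
  intro hact
  exact hc.2 (passive_of_active_add hS hb hc.1 hact)

end SphericalSetup
namespace SphericalSetup

variable {V : Type} [NormedAddCommGroup V] [InnerProductSpace ℝ V]
  {W : Type} [AddCommGroup W] [Module ℝ W]
  {L : Type} [LieRing L] [LieAlgebra ℂ L] [FiniteDimensional ℂ L]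
  {S : SphericalSetup V W L}

open RootSystemData

lemma no_infinite_chain {Y c : V} (hc0 : c ≠ 0)
    (hmem : ∀ j : ℕ, Y + j • c ∈ S.pos) : False := by
  have hinj : Function.Injective (fun j : ℕ => Y + j • c) := by
    intro i j hij
    simp only [add_right_inj] at hij
    have h2 : (i : ℝ) • c = (j : ℝ) • c := by
      rw [Nat.cast_smul_eq_nsmul, Nat.cast_smul_eq_nsmul]
      exact hij
    have h3 : (i : ℝ) = (j : ℝ) := by
      by_contra hne
      apply sub_ne_zero.mpr hne
      have h4 : ((i:ℝ) - j) • c = 0 := by rw [sub_smul, h2, sub_self]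
      rcases smul_eq_zero.mp h4 with h | h
      · exact h
      · exact absurd h hc0
    exact_mod_cast h3
  have hinf := Set.infinite_of_injective_forall_mem hinj hmem
  exact (S.finite.subset (fun v hv => hv.1)).not_infinite hinf

lemma zext (hS : S.Spherical) {b₁ b₂ : V} (h₁ : b₁ ∈ S.active) (h₂ : b₂ ∈ S.active)
    (hg : S.g b₁ ≠ S.g b₂) (hτ : S.τ b₂ = S.τ b₁) :
    ∃ x₁ x₂ : L, x₁ ∈ S.g b₁ ∧ x₂ ∈ S.g b₂ ∧ x₁ ≠ 0 ∧ x₂ ≠ 0 ∧ x₁ + x₂ ∈ S.n := by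
  set w := S.τ b₁ with hw
  have hu1 : S.g b₁ ≤ S.uSp w := g_le_uSp h₁.1 rfl
  have hu2 : S.g b₂ ≤ S.uSp w := g_le_uSp h₂.1 hτ
  have hinf : S.g b₁ ⊓ S.g b₂ = ⊥ := by
    by_contra hne
    obtain ⟨x, hx, hx0⟩ := Submodule.exists_mem_ne_zero_of_ne_bot hne
    obtain ⟨hxa, hxb⟩ := Submodule.mem_inf.mp hx
    exact hg (oneDim_eq (S.g_dim _ h₁.1) (S.g_dim _ h₂.1) hx0 hxa hxb)
  have hP2 : Module.finrank ℂ ((S.g b₁ ⊔ S.g b₂ : Submodule ℂ L)) = 2 := by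
    have h := Submodule.finrank_sup_add_finrank_inf_eq (S.g b₁) (S.g b₂)
    rw [hinf, S.g_dim _ h₁.1, S.g_dim _ h₂.1] at h
    simpa [finrank_bot] using h
  have hcle := hS.1 w
  unfold SphericalSetup.c at hcle
  have hmono : Module.finrank ℂ ((S.n ⊓ S.uSp w : Submodule ℂ L))
      ≤ Module.finrank ℂ (S.uSp w) := Submodule.finrank_mono inf_le_right
  have hsum := Submodule.finrank_sup_add_finrank_inf_eq (S.n ⊓ S.uSp w) (S.g b₁ ⊔ S.g b₂)
  have hle2 : Module.finrank ℂ (((S.n ⊓ S.uSp w) ⊔ (S.g b₁ ⊔ S.g b₂) : Submodule ℂ L))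
      ≤ Module.finrank ℂ (S.uSp w) :=
    Submodule.finrank_mono (sup_le inf_le_right (sup_le hu1 hu2))
  have hkey : 1 ≤ Module.finrank ℂ (((S.n ⊓ S.uSp w) ⊓ (S.g b₁ ⊔ S.g b₂) : Submodule ℂ L)) := by
    omega
  have hbot : (((S.n ⊓ S.uSp w) ⊓ (S.g b₁ ⊔ S.g b₂)) : Submodule ℂ L) ≠ ⊥ := by
    intro h
    rw [h] at hkey
    simp [finrank_bot] at hkey
  obtain ⟨z, hz, hz0⟩ := Submodule.exists_mem_ne_zero_of_ne_bot hbot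
  obtain ⟨hz1, hzP⟩ := Submodule.mem_inf.mp hz
  obtain ⟨hzn, hzu⟩ := Submodule.mem_inf.mp hz1
  obtain ⟨x₁, hx₁, x₂, hx₂, hz12⟩ := Submodule.mem_sup.mp hzP
  have hx₁0 : x₁ ≠ 0 := by
    rintro rfl
    rw [zero_add] at hz12
    exact h₂.2 (oneDim_le (S.g_dim _ h₂.1) (hz12 ▸ hx₂) hz0 hzn)
  have hx₂0 : x₂ ≠ 0 := by
    rintro rfl
    rw [add_zero] at hz12
    exact h₁.2 (oneDim_le (S.g_dim _ h₁.1) (hz12 ▸ hx₁) hz0 hzn)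
  exact ⟨x₁, x₂, hx₁, hx₂, hx₁0, hx₂0, by rw [hz12]; exact hzn⟩

/-- The key rigidity lemma: two distinct active roots, one subordinate to the other,
cannot have the same restricted weight. -/
lemma Klemma (hS : S.Spherical) {X Y : V} (hX : X ∈ S.active) (hY : Y ∈ S.active)
    (hsub : X - Y ∈ S.pos) (hτ : S.τ X = S.τ Y) : False := by
  set c : V := X - Y with hcdef
  have hc0 : c ≠ 0 := root_ne_zero hsub.1
  have hXY : Y + c = X := by rw [hcdef]; abel
  have hXact' : Y + c ∈ S.active := by rwa [hXY]
  have hcpass : S.g c ≤ S.n := passive_of_active_add hS hY hsub hXact'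
  obtain ⟨y, hy, hy0⟩ := g_ne_bot hsub
  have hyn : y ∈ S.n := hcpass hy
  have harith : ∀ j : ℕ, (Y + j • c) + c = Y + (j+1) • c := by
    intro j
    rw [succ_nsmul]
    abel
  have harith' : ∀ j : ℕ, c + (Y + j • c) = Y + (j+1) • c := by
    intro j
    rw [succ_nsmul]
    abel
  have hY0 : Y + (0:ℕ) • c = Y := by simp
  have hY1 : Y + (1:ℕ) • c = X := by
    rw [one_nsmul]
    exact hXY
  -- the root spaces of X and Y are distinct
  have hgne : S.g X ≠ S.g Y := by
    intro hEq
    obtain ⟨x, hx, hx0⟩ := g_ne_bot hY.1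
    have main : ∀ j : ℕ, (Y + j • c ∈ S.pos) ∧ S.g (Y + j • c) = S.g Y := by
      intro j
      induction j with
      | zero =>
        rw [hY0]
        exact ⟨hY.1, rfl⟩
      | succ j ih =>
        obtain ⟨hp, hgj⟩ := ih
        have hxj : x ∈ S.g (Y + j • c) := by rw [hgj]; exact hx
        have hbr : ⁅x, y⁆ ∈ S.g ((Y + j • c) + c) := S.bracket_mem _ _ x hxj y hy
        rw [harith j] at hbr
        have hbr0 : ⁅x, y⁆ ∈ S.g (Y + c) := S.bracket_mem _ _ x hx y hy
        rw [hXY] at hbr0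
        have hbrY : ⁅x, y⁆ ∈ S.g Y := by rw [← hEq]; exact hbr0
        have hne0 : ⁅x, y⁆ ≠ (0:L) := by
          refine bracket_ne' hY.1 hsub ?_ hx hx0 hy hy0
          rw [hXY]
          exact hX.1
        have hposnew : Y + (j+1) • c ∈ S.pos := by
          by_contra hnp
          rw [S.g_bot _ hnp] at hbr
          rw [Submodule.mem_bot] at hbr
          exact hne0 hbr
        exact ⟨hposnew, oneDim_eq (S.g_dim _ hposnew) (S.g_dim _ hY.1) hne0 hbr hbrY⟩
    exact no_infinite_chain hc0 (fun j => (main j).1)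
  obtain ⟨x₁, x₂, hx₁, hx₂, hx₁0, hx₂0, hzn⟩ := zext hS hY hX (Ne.symm hgne) hτ
  have main : ∀ j : ℕ, (Y + j • c ∈ S.pos) ∧ (Y + (j+1) • c ∈ S.pos) ∧
      ¬ S.g (Y + (j+1) • c) ≤ S.n ∧
      ∃ u v : L, u + v ∈ S.n ∧ u ∈ S.g (Y + j • c) ∧ u ≠ 0 ∧ v ∈ S.g (Y + (j+1) • c) := by
    intro j
    induction j with
    | zero =>
      refine ⟨by rw [hY0]; exact hY.1, ?_, ?_, x₁, x₂, hzn, by rw [hY0]; exact hx₁, hx₁0, ?_⟩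
      · rw [zero_add, hY1]
        exact hX.1
      · rw [zero_add, hY1]
        exact hX.2
      · rw [zero_add, hY1]
        exact hx₂
    | succ j ih =>
      obtain ⟨hp0, hp1, hact, u, v, huvn, hu, hu0, hv⟩ := ih
      have hu' : ⁅y, u⁆ ∈ S.g (Y + (j+1) • c) := by
        have := S.bracket_mem c (Y + j • c) y hy u hu
        rwa [harith' j] at this
      have hv' : ⁅y, v⁆ ∈ S.g (Y + (j+1+1) • c) := by
        have := S.bracket_mem c (Y + (j+1) • c) y hy v hv
        rwa [harith' (j+1)] at this
      have hz'n : ⁅y, u⁆ + ⁅y, v⁆ ∈ S.n := by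
        rw [← lie_add]
        exact S.n_bracket y hyn (u + v) huvn
      have hu'0 : ⁅y, u⁆ ≠ (0:L) := by
        refine bracket_ne' hsub hp0 ?_ hy hy0 hu hu0
        rw [harith' j]
        exact hp1
      have hu'n : ⁅y, u⁆ ∉ S.n := by
        intro hun
        exact hact (oneDim_le (S.g_dim _ hp1) hu' hu'0 hun)
      have hv'n : ⁅y, v⁆ ∉ S.n := by
        intro hvn
        apply hu'n
        have : ⁅y, u⁆ = (⁅y, u⁆ + ⁅y, v⁆) - ⁅y, v⁆ := by abel
        rw [this]
        exact Submodule.sub_mem _ hz'n hvn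
      have hv'0 : ⁅y, v⁆ ≠ (0:L) := fun h => hv'n (h ▸ Submodule.zero_mem _)
      have hposnew : Y + (j+1+1) • c ∈ S.pos := by
        by_contra hnp
        rw [S.g_bot _ hnp, Submodule.mem_bot] at hv'
        exact hv'0 hv'
      exact ⟨hp1, hposnew, fun hle => hv'n (hle hv'),
        ⁅y, u⁆, ⁅y, v⁆, hz'n, hu', hu'0, hv'⟩
  exact no_infinite_chain hc0 (fun j => (main j).1)

end SphericalSetup
namespace SphericalSetup

variable {V : Type} [NormedAddCommGroup V] [InnerProductSpace ℝ V]
  {W : Type} [AddCommGroup W] [Module ℝ W]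
  {L : Type} [LieRing L] [LieAlgebra ℂ L] [FiniteDimensional ℂ L]
  {S : SphericalSetup V W L}

open RootSystemData

lemma δaux (hS : S.Spherical) {α β₁ β₂ : V} (hα : α ∈ S.active)
    (h₁ : β₁ ∈ S.active) (h₂ : β₂ ∈ S.active) (hne : β₁ ≠ β₂)
    (hs₁ : α - β₁ ∈ S.pos) (hs₂ : α - β₂ ∈ S.pos) (hτ : S.τ β₁ = S.τ β₂) :
    β₂ + (α - β₁) ∈ S.active := by
  set γ₁ : V := α - β₁ with hγ₁def
  have hsum1 : β₁ + γ₁ = α := by rw [hγ₁def]; abel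
  have hγ₁pass : S.g γ₁ ≤ S.n := passive_of_active_add hS h₁ hs₁ (by rwa [hsum1])
  obtain ⟨y₁, hy₁, hy₁0⟩ := g_ne_bot hs₁
  have hy₁n : y₁ ∈ S.n := hγ₁pass hy₁
  rcases Classical.em (S.g β₁ = S.g β₂) with hgeq | hgne
  · obtain ⟨x, hx, hx0⟩ := g_ne_bot h₁.1
    have hξα : ⁅x, y₁⁆ ∈ S.g α := by
      have := S.bracket_mem β₁ γ₁ x hx y₁ hy₁
      rwa [hsum1] at this
    have hξ0 : ⁅x, y₁⁆ ≠ (0:L) := by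
      refine bracket_ne' h₁.1 hs₁ ?_ hx hx0 hy₁ hy₁0
      rw [hsum1]
      exact hα.1
    have hξ2 : ⁅x, y₁⁆ ∈ S.g (β₂ + γ₁) :=
      S.bracket_mem β₂ γ₁ x (hgeq ▸ hx) y₁ hy₁
    have hpos : β₂ + γ₁ ∈ S.pos := by
      by_contra hnp
      rw [S.g_bot _ hnp, Submodule.mem_bot] at hξ2
      exact hξ0 hξ2
    refine ⟨hpos, fun hle => ?_⟩
    exact hα.2 (oneDim_le (S.g_dim _ hα.1) hξα hξ0 (hle hξ2))
  · obtain ⟨x₁, x₂, hx₁, hx₂, hx₁0, hx₂0, hzn⟩ := zext hS h₁ h₂ hgne hτ.symm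
    have hz'n : ⁅x₁, y₁⁆ + ⁅x₂, y₁⁆ ∈ S.n := by
      rw [← add_lie]
      exact S.n_bracket (x₁ + x₂) hzn y₁ hy₁n
    have ht₁α : ⁅x₁, y₁⁆ ∈ S.g α := by
      have := S.bracket_mem β₁ γ₁ x₁ hx₁ y₁ hy₁
      rwa [hsum1] at this
    have ht₁0 : ⁅x₁, y₁⁆ ≠ (0:L) := by
      refine bracket_ne' h₁.1 hs₁ ?_ hx₁ hx₁0 hy₁ hy₁0
      rw [hsum1]
      exact hα.1
    have ht₂ : ⁅x₂, y₁⁆ ∈ S.g (β₂ + γ₁) := S.bracket_mem β₂ γ₁ x₂ hx₂ y₁ hy₁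
    have hpos : β₂ + γ₁ ∈ S.pos := by
      by_contra hnp
      rw [S.g_bot _ hnp, Submodule.mem_bot] at ht₂
      rw [ht₂, add_zero] at hz'n
      exact hα.2 (oneDim_le (S.g_dim _ hα.1) ht₁α ht₁0 hz'n)
    refine ⟨hpos, fun hle => ?_⟩
    have ht₂n : ⁅x₂, y₁⁆ ∈ S.n := hle ht₂
    have ht₁n : ⁅x₁, y₁⁆ ∈ S.n := by
      have : ⁅x₁, y₁⁆ = (⁅x₁, y₁⁆ + ⁅x₂, y₁⁆) - ⁅x₂, y₁⁆ := by abel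
      rw [this]
      exact Submodule.sub_mem _ hz'n ht₂n
    exact hα.2 (oneDim_le (S.g_dim _ hα.1) ht₁α ht₁0 ht₁n)

/-- Two distinct active roots subordinate to the same active root have distinct
restricted weights. -/
lemma Pairlemma (hS : S.Spherical) {α β₁ β₂ : V} (hα : α ∈ S.active)
    (h₁ : β₁ ∈ S.active) (h₂ : β₂ ∈ S.active) (hne : β₁ ≠ β₂)
    (hs₁ : α - β₁ ∈ S.pos) (hs₂ : α - β₂ ∈ S.pos) (hτ : S.τ β₁ = S.τ β₂) : False := by
  have hδ₁act : β₂ + (α - β₁) ∈ S.active := δaux hS hα h₁ h₂ hne hs₁ hs₂ hτ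
  have hδ₂act : β₁ + (α - β₂) ∈ S.active := δaux hS hα h₂ h₁ hne.symm hs₂ hs₁ hτ.symm
  set δ₁ : V := β₂ + (α - β₁) with hδ₁def
  set δ₂ : V := β₁ + (α - β₂) with hδ₂def
  have hδ₁α : δ₁ ≠ α := by
    intro h
    apply hne
    have h' : β₂ = α - (α - β₁) := eq_sub_iff_add_eq.mpr h
    rw [sub_sub_cancel] at h'
    exact h'.symm
  have hδ₂α : δ₂ ≠ α := by
    intro h
    apply hne
    have h' : β₁ = α - (α - β₂) := eq_sub_iff_add_eq.mpr h
    rw [sub_sub_cancel] at h'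
    exact h'
  -- v = δ₁ - α = α - δ₂
  have hv₁ : δ₁ - α = β₂ - β₁ := by rw [hδ₁def]; abel
  have hv₂ : α - δ₂ = β₂ - β₁ := by rw [hδ₂def]; abel
  have hv0 : β₂ - β₁ ≠ 0 := sub_ne_zero.mpr hne.symm
  have hαα : (0:ℝ) < ⟪α, α⟫_ℝ := inner_self_pos' (root_ne_zero hα.1.1)
  have hsumδ : δ₁ + δ₂ = α + α := by rw [hδ₁def, hδ₂def]; abel
  have hipsum : ⟪α, δ₁⟫_ℝ + ⟪α, δ₂⟫_ℝ = 2 * ⟪α, α⟫_ℝ := by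
    rw [← inner_add_right]
    rw [hsumδ, inner_add_right]
    ring
  have hdep : ∀ δ : V, δ ∈ S.pos → δ ≠ α → (∀ c : ℝ, δ ≠ c • α) := by
    intro δ hδpos hδα c hc
    rcases smul_root hα.1.1 (by rw [← hc]; exact hδpos.1) with h1 | h1
    · rw [h1, one_smul] at hc
      exact hδα hc
    · rw [h1] at hc
      have hneg : -α = δ := by rw [hc]; module
      exact neg_not_pos hα.1 (hneg ▸ hδpos)
  have hvroot : β₂ - β₁ ∈ S.roots := by
    rcases lt_or_ge 0 ⟪α, δ₁⟫_ℝ with hip | hip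
    · have h := sub_mem_of_inner_pos hα.1.1 hδ₁act.1.1 hip (hdep δ₁ hδ₁act.1 hδ₁α)
      have he : β₂ - β₁ = -(α - δ₁) := by rw [← hv₁]; abel
      rw [he]
      exact S.neg_mem _ h
    · have hip2 : 0 < ⟪α, δ₂⟫_ℝ := by linarith
      have h := sub_mem_of_inner_pos hα.1.1 hδ₂act.1.1 hip2 (hdep δ₂ hδ₂act.1 hδ₂α)
      rwa [hv₂] at h
  rcases pos_or_neg hvroot with hvpos | hvneg
  · -- K applied to (δ₁, α)
    refine Klemma hS hδ₁act hα ?_ ?_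
    · rw [hv₁]
      exact hvpos
    · rw [hδ₁def, map_add, map_sub, ← hτ]
      abel
  · -- K applied to (δ₂, α)
    refine Klemma hS hδ₂act hα ?_ ?_
    · have : δ₂ - α = -(β₂ - β₁) := by rw [← hv₂]; abel
      rw [this]
      exact hvneg
    · rw [hδ₂def, map_add, map_sub, hτ]
      abel

end SphericalSetup

open RootSystemData SphericalSetup

/-- Let `H` be a connected solvable spherical subgroup of `G` standardly embedded in `B`
and `α` an active root.  Then:
(a) `|F(α)| = |Supp α|`;
(b) the restricted weights `τ(β)`, `β ∈ F(α)`, are linearly independent;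
(c) the linear span of `F(α)` equals the linear span of `Supp α`. -/
theorem family_card_weights_span
    {V : Type} [NormedAddCommGroup V] [InnerProductSpace ℝ V]
    {W : Type} [AddCommGroup W] [Module ℝ W]
    {L : Type} [LieRing L] [LieAlgebra ℂ L] [FiniteDimensional ℂ L]
    (S : SphericalSetup V W L) (hS : S.Spherical)
    {α : V} (hα : α ∈ S.active) :
    (S.family α).ncard = (S.Supp α).card ∧
      LinearIndependent ℝ (fun β : S.family α => S.τ (β : V)) ∧
      Submodule.span ℝ (S.family α) = Submodule.span ℝ ((S.Supp α : Set V)) := by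
  classical
  set Sb : Set V := {β ∈ S.active | α - β ∈ S.pos} with hSbdef
  have hfam : S.family α = insert α Sb := rfl
  have hfamsub : S.family α ⊆ S.pos := by
    rw [hfam]
    rintro β hβ
    rcases hβ with rfl | hβ
    · exact hα.1
    · exact hβ.1.1
  have hfinfam : (S.family α).Finite := S.finite.subset (fun β hβ => (hfamsub hβ).1)
  have hfamact : ∀ β ∈ S.family α, β ∈ S.active := by
    rw [hfam]
    rintro β hβ
    rcases hβ with rfl | hβ
    · exact hα
    · exact hβ.1
  -- τ is injective on the family
  have hinj : ∀ β₁ ∈ S.family α, ∀ β₂ ∈ S.family α, S.τ β₁ = S.τ β₂ → β₁ = β₂ := by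
    intro β₁ hβ₁ β₂ hβ₂ hττ
    by_contra hne
    rw [hfam] at hβ₁ hβ₂
    rcases hβ₁ with rfl | hβ₁
    · rcases hβ₂ with rfl | hβ₂
      · exact hne rfl
      · exact Klemma hS hα hβ₂.1 hβ₂.2 hττ
    · rcases hβ₂ with rfl | hβ₂
      · exact Klemma hS hα hβ₁.1 hβ₁.2 hττ.symm
      · exact Pairlemma hS hα hβ₁.1 hβ₂.1 hne hβ₁.2 hβ₂.2 hττ
  letI : Fintype (S.family α) := hfinfam.fintype
  have hmap : ∀ β : (S.family α), S.c (S.τ (β : V)) = 1 := fun β => cOne hS (hfamact _ β.2)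
  set e : (S.family α) → {w : W // S.c w = 1} := fun β => ⟨S.τ (β : V), hmap β⟩ with hedef
  have heinj : Function.Injective e := by
    intro a b hab
    have h1 : S.τ (a : V) = S.τ (b : V) := congrArg Subtype.val hab
    exact Subtype.ext (hinj _ a.2 _ b.2 h1)
  have hliτ : LinearIndependent ℝ (fun β : S.family α => S.τ (β : V)) := hS.2.comp e heinj
  have hliV : LinearIndependent ℝ (fun β : S.family α => (β : V)) :=
    LinearIndependent.of_comp S.τ hliτ
  -- every member of the family lies in the span of `Supp α`
  have hsuppmem : ∀ β ∈ S.family α, β ∈ Submodule.span ℝ ((S.Supp α : Set V)) := by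
    intro β hβ
    have hβpos := hfamsub hβ
    have hsubsup : S.Supp β ⊆ S.Supp α := by
      intro γ hγ
      obtain ⟨hγs, hγc⟩ := Finset.mem_filter.mp hγ
      refine Finset.mem_filter.mpr ⟨hγs, ?_⟩
      rw [hfam] at hβ
      rcases hβ with rfl | hβ
      · exact hγc
      · have hαβ : β + (α - β) = α := by abel
        have hadd := add_coeff hβpos.1 hβ.2.1 (by rw [hαβ]; exact hα.1.1)
        have h1 := hβpos.2 γ hγs
        have h2 := hβ.2.2 γ hγs
        have h3 := hadd γ hγs
        rw [hαβ] at h3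
        omega
    have hspan := Submodule.span_mono (R := ℝ)
      (show ((S.Supp β : Set V)) ⊆ ((S.Supp α : Set V)) by exact_mod_cast hsubsup)
    exact hspan (mem_span_supp hβpos.1)
  -- counting
  set D : Set V := {β : V | β ∈ S.pos ∧ α - β ∈ S.pos} with hDdef
  have hDfin : D.Finite := S.finite.subset (fun v hv => hv.1.1)
  have hSbfin : Sb.Finite := S.finite.subset (fun v hv => hv.1.1.1)
  have hD2 : D.ncard = 2 * Sb.ncard := by
    set P : Set V := {β ∈ D | S.g β ≤ S.n} with hPdef
    have hPfin : P.Finite := hDfin.subset (fun v hv => hv.1)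
    have hDU : D = Sb ∪ P := by
      ext v
      constructor
      · intro hv
        rcases Classical.em (S.g v ≤ S.n) with h | h
        · exact Or.inr ⟨hv, h⟩
        · exact Or.inl ⟨⟨hv.1, h⟩, hv.2⟩
      · rintro (hv | hv)
        · exact ⟨hv.1.1, hv.2⟩
        · exact hv.1
    have hdisj : Disjoint Sb P := by
      rw [Set.disjoint_left]
      intro v hv hvP
      exact hv.1.2 hvP.2
    have himg1 : (fun v => α - v) '' Sb ⊆ P := by
      rintro - ⟨v, hv, rfl⟩
      have hsum : v + (α - v) = α := by abel
      refine ⟨⟨hv.2, by rw [sub_sub_cancel]; exact hv.1.1⟩, ?_⟩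
      exact passive_of_active_add hS hv.1 hv.2 (by rwa [hsum])
    have himg2 : (fun v => α - v) '' P ⊆ Sb := by
      rintro - ⟨v, hv, rfl⟩
      have hvpos := hv.1.1
      have hαv := hv.1.2
      have hsum : v + (α - v) = α := by abel
      rcases atLeastOne hvpos hαv (by rwa [hsum]) with h | h
      · exact absurd hv.2 h.2
      · exact ⟨h, by rw [sub_sub_cancel]; exact hvpos⟩
    have hinj2 : Function.Injective (fun v : V => α - v) := by
      intro a b h
      have := congrArg (fun u => α - u) h
      simpa using this
    have hcard1 : Sb.ncard = P.ncard :=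
      le_antisymm
        (by
          rw [← Set.ncard_image_of_injective Sb hinj2]
          exact Set.ncard_le_ncard himg1 hPfin)
        (by
          rw [← Set.ncard_image_of_injective P hinj2]
          exact Set.ncard_le_ncard himg2 hSbfin)
    rw [hDU, Set.ncard_union_eq hdisj hSbfin hPfin, hcard1]
    omega
  have hcount := two_mul_card_le_D S.toRootSystemData α hα.1
  rw [← hDdef] at hcount
  have hαSb : α ∉ Sb := by
    intro h
    have h2 := h.2
    rw [sub_self] at h2
    exact zero_not_pos h2
  have hfcard : (S.family α).ncard = Sb.ncard + 1 := by
    rw [hfam, Set.ncard_insert_of_notMem hαSb hSbfin]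
  -- the span of the support
  set M := Submodule.span ℝ ((S.Supp α : Set V)) with hMdef
  haveI : Module.Finite ℝ M := Module.Finite.span_of_finite ℝ (S.Supp α).finite_toSet
  have hsuppli : LinearIndependent ℝ (fun x : ((S.Supp α : Set V)) => (x : V)) := by
    have hmono : ((S.Supp α : Set V)) ⊆ ((S.simples : Set V)) := by
      intro x hx
      exact Finset.mem_coe.mpr (Finset.filter_subset _ _ (Finset.mem_coe.mp hx))
    exact (show LinearIndepOn ℝ id (S.simples : Set V) from S.simples_indep).mono hmono
  have hfrM : Module.finrank ℝ M = (S.Supp α).card := by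
    rw [hMdef, finrank_span_set_eq_card hsuppli]
    simp
  have hncard_card : (S.family α).ncard = Fintype.card (S.family α) := by
    rw [← Nat.card_coe_set_eq, Nat.card_eq_fintype_card]
  have hupper : (S.family α).ncard ≤ (S.Supp α).card := by
    set v' : (S.family α) → M := fun β => ⟨(β : V), hsuppmem _ β.2⟩ with hv'def
    have hliM : LinearIndependent ℝ v' := by
      apply LinearIndependent.of_comp M.subtype
      exact hliV
    have hcard := hliM.fintype_card_le_finrank
    rw [hfrM] at hcard
    rw [hncard_card]
    exact hcard
  have hlower : (S.Supp α).card ≤ (S.family α).ncard := by omega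
  have hcardeq : (S.family α).ncard = (S.Supp α).card := le_antisymm hupper hlower
  refine ⟨hcardeq, hliτ, ?_⟩
  have hle : Submodule.span ℝ (S.family α) ≤ M :=
    Submodule.span_le.mpr (fun β hβ => hsuppmem β hβ)
  have hliset : LinearIndependent ℝ (fun x : (S.family α) => (x : V)) := hliV
  have hfrF : Module.finrank ℝ (Submodule.span ℝ (S.family α)) = (S.family α).ncard := by
    rw [finrank_span_set_eq_card hliset, Set.ncard_eq_toFinset_card']
  exact Submodule.eq_of_le_of_finrank_le hle (by rw [hfrM, hfrF, hcardeq])
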